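/- Let R ≤ M_n(ℂ) be a subspace with R† = R. If R is vertex-transitive, then either R is a quantum graph (i.e., every element of R is traceless) or the identity matrix 1_n belongs to R. -/

import Mathlib

namespace QG

open Matrix

abbrev Mat (n : ℕ) := Matrix (Fin n) (Fin n) ℂ

/-- Conjugation `a ↦ u * a * uᴴ` as a linear map. -/
noncomputable def conjMap {n : ℕ} (u : Mat n) : Mat n →ₗ[ℂ] Mat n :=
  (LinearMap.mulLeft ℂ u).comp (LinearMap.mulRight ℂ uᴴ)

/-- The stabilizer of `R`: unitaries `u` with `u R uᴴ = R`. -/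
def Stab {n : ℕ} (R : Submodule ℂ (Mat n)) : Set (Mat n) :=
  {u | u ∈ Matrix.unitaryGroup (Fin n) ℂ ∧ R.map (conjMap u) = R}

/-- `R` is vertex-transitive if the ℂ-linear span of `Stab R` is all of `M_n(ℂ)`. -/
def IsVertexTransitive {n : ℕ} (R : Submodule ℂ (Mat n)) : Prop :=
  Submodule.span ℂ (Stab R) = ⊤

/-- The linear equivalence between matrices and Euclidean space. -/
noncomputable def matE (n : ℕ) : Mat n ≃ₗ[ℂ] EuclideanSpace ℂ (Fin n × Fin n) where
  toFun m := WithLp.toLp 2 (fun p : Fin n × Fin n => m p.1 p.2)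
  invFun v := Matrix.of fun i j => v (i, j)
  map_add' _ _ := rfl
  map_smul' _ _ := rfl
  left_inv _ := rfl
  right_inv _ := rfl

lemma conjMap_apply {n : ℕ} (u a : Mat n) : conjMap u a = u * (a * uᴴ) := rfl

lemma inner_matE {n : ℕ} (a b : Mat n) :
    (inner ℂ (matE n a) (matE n b) : ℂ) = (aᴴ * b).trace := by
  simp only [PiLp.inner_apply, RCLike.inner_apply, Matrix.trace, Matrix.diag,
    Matrix.mul_apply, Matrix.conjTranspose_apply, matE, LinearEquiv.coe_mk]
  rw [Fintype.sum_prod_type, Finset.sum_comm]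
  simp [mul_comm]
  rfl

/-- if `Rᴴ = R` is vertex-transitive, then either `R` is a quantum graph
(all elements traceless) or `1ₙ ∈ R`. -/
theorem stmt0 {n : ℕ} (R : Submodule ℂ (Mat n)) (hstar : ∀ a ∈ R, aᴴ ∈ R)
    (hvt : IsVertexTransitive R) :
    (∀ a ∈ R, a.trace = 0) ∨ (1 : Mat n) ∈ R := by
  by_cases hQ : ∀ a ∈ R, a.trace = 0
  · exact Or.inl hQ
  right
  push_neg at hQ
  obtain ⟨a, haR, hatr⟩ := hQ
  -- orthogonal decomposition of 1
  set V : Submodule ℂ (EuclideanSpace ℂ (Fin n × Fin n)) := R.map (matE n).toLinearMap with hV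
  obtain ⟨y, hy, z, hz, hyz⟩ := V.exists_add_mem_mem_orthogonal ((matE n) (1 : Mat n))
  set p : Mat n := (matE n).symm y with hp
  set q : Mat n := (matE n).symm z with hq
  have hyp : y = matE n p := by simp [hp]
  have hzq : z = matE n q := by simp [hq]
  have hpR : p ∈ R := by
    obtain ⟨b, hbR, hb⟩ := hy
    have hpb : p = b := by rw [hp, ← hb]; simp
    rwa [hpb]
  have hone : (1 : Mat n) = p + q := by
    have h := congrArg (matE n).symm hyz
    simpa [hp, hq] using h
  -- q is orthogonal to every element of R (in trace form)
  have hqorth : ∀ b ∈ R, (bᴴ * q).trace = 0 := by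
    intro b hbR
    have h : (inner ℂ (matE n b) z : ℂ) = 0 :=
      (Submodule.mem_orthogonal V z).mp hz _ ⟨b, hbR, rfl⟩
    rwa [hzq, inner_matE] at h
  -- p commutes with every stabilizer element
  have hcomm : ∀ u ∈ Stab R, u * p = p * u := by
    rintro u ⟨hu1, hu2⟩
    have huu : uᴴ * u = 1 := by
      simpa [Matrix.star_eq_conjTranspose] using (Matrix.mem_unitaryGroup_iff'.mp hu1)
    have huu' : u * uᴴ = 1 := by
      simpa [Matrix.star_eq_conjTranspose] using (Matrix.mem_unitaryGroup_iff.mp hu1)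
    -- R is invariant under conjugation by uᴴ as well
    have hmapinv : R.map (conjMap uᴴ) = R := by
      conv_lhs => rw [← hu2]
      rw [← Submodule.map_comp]
      have hid : (conjMap uᴴ).comp (conjMap u) = LinearMap.id := by
        apply LinearMap.ext; intro x
        simp only [LinearMap.comp_apply, conjMap_apply, LinearMap.id_apply,
          conjTranspose_conjTranspose]
        calc uᴴ * (u * (x * uᴴ) * u) = (uᴴ * u) * (x * (uᴴ * u)) := by noncomm_ring
        _ = x := by rw [huu]; simp
      rw [hid, Submodule.map_id]
    have hinv : ∀ b ∈ R, uᴴ * (b * u) ∈ R := by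
      intro b hbR
      have h : conjMap uᴴ b ∈ R.map (conjMap uᴴ) := Submodule.mem_map_of_mem hbR
      rw [hmapinv] at h
      simpa [conjMap_apply, conjTranspose_conjTranspose] using h
    -- conjMap u q ∈ Vᗮ
    have hcqorth : matE n (conjMap u q) ∈ Vᗮ := by
      rw [Submodule.mem_orthogonal]
      rintro w ⟨b, hbR, rfl⟩
      simp only [LinearEquiv.coe_coe]
      rw [inner_matE]
      have hc : uᴴ * (b * u) ∈ R := hinv b hbR
      have h0 : ((uᴴ * (b * u))ᴴ * q).trace = 0 := hqorth _ hc
      rw [conjMap_apply]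
      calc (bᴴ * (u * (q * uᴴ))).trace = ((bᴴ * u * q) * uᴴ).trace := by
            congr 1; noncomm_ring
      _ = (uᴴ * (bᴴ * u * q)).trace := by rw [Matrix.trace_mul_comm]
      _ = ((uᴴ * (b * u))ᴴ * q).trace := by
            rw [show (uᴴ * (b * u))ᴴ = uᴴ * bᴴ * u by
              simp [conjTranspose_mul, conjTranspose_conjTranspose, mul_assoc]]
            congr 1; noncomm_ring
      _ = 0 := h0
    -- conjMap u p ∈ R
    have hcpR : conjMap u p ∈ R := by
      rw [← hu2]; exact Submodule.mem_map_of_mem hpR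
    -- uniqueness of orthogonal decomposition
    have hone' : matE n (conjMap u p) + matE n (conjMap u q) = y + z := by
      rw [← map_add, ← hyz]
      congr 1
      rw [conjMap_apply, conjMap_apply, ← mul_add, ← add_mul, ← hone, one_mul, huu']
    have hdiff : matE n (conjMap u p) - y = z - matE n (conjMap u q) := by
      linear_combination (norm := module) hone'
    have hmemV : matE n (conjMap u p) - y ∈ V := by
      apply Submodule.sub_mem
      · exact ⟨conjMap u p, hcpR, rfl⟩
      · exact hy
    have hmemVo : matE n (conjMap u p) - y ∈ Vᗮ := by
      rw [hdiff]; exact Submodule.sub_mem _ hz hcqorth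
    have hzero : matE n (conjMap u p) - y = 0 := by
      have hd := Submodule.orthogonal_disjoint V
      exact (Submodule.disjoint_def.mp hd) _ hmemV hmemVo
    have hfix : conjMap u p = p := by
      apply (matE n).injective
      rw [hyp] at hzero
      exact sub_eq_zero.mp hzero
    have hfix' : u * (p * uᴴ) = p := by rw [← conjMap_apply, hfix]
    calc u * p = u * p * (uᴴ * u) := by rw [huu, mul_one]
    _ = (u * (p * uᴴ)) * u := by noncomm_ring
    _ = p * u := by rw [hfix']
  -- p commutes with everything
  have hcommAll : ∀ x : Mat n, x * p = p * x := by
    let C : Submodule ℂ (Mat n) :=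
      { carrier := {x | x * p = p * x}
        add_mem' := by intro x y hx hy; simp only [Set.mem_setOf_eq] at *
                       rw [add_mul, mul_add, hx, hy]
        zero_mem' := by simp
        smul_mem' := by intro c x hx; simp only [Set.mem_setOf_eq] at *
                        rw [smul_mul_assoc, mul_smul_comm, hx] }
    have hsub : Stab R ⊆ C := fun u hu => hcomm u hu
    have hspan : Submodule.span ℂ (Stab R) ≤ C := Submodule.span_le.mpr hsub
    rw [hvt] at hspan
    intro x
    exact hspan (Submodule.mem_top (x := x))
  -- p is scalar
  obtain ⟨c, hc⟩ := Matrix.mem_range_scalar_of_commute_single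
    (M := p) (fun i j _ => hcommAll _)
  have hps : p = c • (1 : Mat n) := by
    rw [← hc]
    ext i j
    simp [Matrix.scalar_apply, Matrix.one_apply, Matrix.diagonal_apply, mul_ite]
  -- final computation
  have haq : (a * q).trace = 0 := by
    have h := hqorth aᴴ (hstar a haR)
    rwa [conjTranspose_conjTranspose] at h
  have htr : a.trace = c * a.trace := by
    calc a.trace = (a * (1 : Mat n)).trace := by rw [mul_one]
    _ = (a * p).trace + (a * q).trace := by rw [hone, mul_add, trace_add]
    _ = (a * p).trace := by rw [haq, add_zero]
    _ = c * a.trace := by rw [hps, mul_smul_comm, trace_smul, mul_one, smul_eq_mul]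
  have hc1 : c = 1 := by
    have h : (c - 1) * a.trace = 0 := by linear_combination -htr
    rcases mul_eq_zero.mp h with h' | h'
    · exact sub_eq_zero.mp h'
    · exact absurd h' hatr
  have hp1 : p = 1 := by rw [hps, hc1, one_smul]
  exact hp1 ▸ hpR

end QG
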